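/- arXiv:2203.14294 — 2 statements merged into one kernel-verified Lean document; each statement's English description precedes it below -/
import Mathlib

section
/- Suppose that in addition lim_{t→∞} (1/t)∫_0^t P(q1(u) ≤ c1) du = 0. Then λ1 ≥ μ1 + μ_{1|2}(1 − ρ2). Equivalently (contrapositive), if λ1 < μ1 + μ_{1|2}(1 − ρ2), then limsup_{t→∞} (1/t)∫_0^t P(q1(u) ≤ c1) du > 0. (This is the sample-path core of the sufficiency part of Theorem 3.1 on stability of the 2-station cascade system, as isolated in Section 6 of the paper.) -/
open MeasureTheory Filter Set

private lemma bdd_intervalIntegrable {f : ℝ → ℝ} (hf : Measurable f)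
    (hb : ∀ u, ‖f u‖ ≤ 1) (a b : ℝ) :
    IntervalIntegrable f MeasureTheory.volume a b := by
  constructor <;>
    exact MeasureTheory.Measure.integrableOn_of_bounded measure_Ioc_lt_top.ne
      hf.aestronglyMeasurable (Filter.Eventually.of_forall hb)

/-- the sample-path core of the sufficiency part of Theorem 3.1, as
isolated in Section 6 of the paper.  Fix `λ1, μ1, μ_{1|2} > 0`, `0 ≤ ρ2 < 1` and an
integer threshold `c1 ≥ 1`.  Queue lengths `q1, q2` are jointly measurable; the arrival
and departure counting processes `A1, D1, A_{1|2}, D_{1|2}` are nondecreasing in `t` with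
value `0` at `t = 0`, and `N1, N_{1|2}` are nondecreasing potential-service counting
processes.  With the occupation integrals `B1 t = ∫_0^t 1(q1 u ≥ 1) du`,
`I2 t = ∫_0^t 1(q2 u = 0) du` and `J_{1|2} t = ∫_0^t 1(q1 u > c1 ∧ q2 u = 0) du`, assume
the pathwise relations `q1 t = q1 0 + A1 t − D1 t − A_{1|2} t`,
`D_{1|2} t ≤ A_{1|2} t ≤ D_{1|2} t + 1`, `D1 t = N1 (B1 t)` and
`N_{1|2} (J_{1|2} t) ≤ D_{1|2} t ≤ N_{1|2} (I2 t)` for all `t ≥ 0` and every `ω`; assume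
the almost sure limits `A1 t / t → λ1`, `N1 t / t → μ1`, `N_{1|2} t / t → μ_{1|2}` and
`I2 t / t → 1 − ρ2` as `t → ∞`.  If moreover
`(1/t) ∫_0^t P(q1 u ≤ c1) du → 0`, then `λ1 ≥ μ1 + μ_{1|2} (1 − ρ2)`. -/
theorem cascade_two_station_core
    {Ω : Type*} [MeasurableSpace Ω] (P : Measure Ω) [IsProbabilityMeasure P]
    (lam1 mu1 mu12 ρ2 : ℝ) (c1 : ℕ)
    (hlam1 : 0 < lam1) (hmu1 : 0 < mu1) (hmu12 : 0 < mu12)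
    (hρ2_nonneg : 0 ≤ ρ2) (hρ2_lt : ρ2 < 1) (hc1 : 1 ≤ c1)
    (q1 q2 : ℝ → Ω → ℕ)
    (hq1meas : Measurable (Function.uncurry q1))
    (hq2meas : Measurable (Function.uncurry q2))
    (A1 D1 A12 D12 N1 N12 : ℝ → Ω → ℕ)
    (hA1mono : ∀ ω, MonotoneOn (fun t => A1 t ω) (Ici 0))
    (hD1mono : ∀ ω, MonotoneOn (fun t => D1 t ω) (Ici 0))
    (hA12mono : ∀ ω, MonotoneOn (fun t => A12 t ω) (Ici 0))
    (hD12mono : ∀ ω, MonotoneOn (fun t => D12 t ω) (Ici 0))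
    (hN1mono : ∀ ω, MonotoneOn (fun t => N1 t ω) (Ici 0))
    (hN12mono : ∀ ω, MonotoneOn (fun t => N12 t ω) (Ici 0))
    (hA1zero : ∀ ω, A1 0 ω = 0) (hD1zero : ∀ ω, D1 0 ω = 0)
    (hA12zero : ∀ ω, A12 0 ω = 0) (hD12zero : ∀ ω, D12 0 ω = 0)
    -- pathwise flow balance: q1(t) = q1(0) + A1(t) − D1(t) − A_{1|2}(t)
    (hflow : ∀ t ≥ (0:ℝ), ∀ ω,
      (q1 t ω : ℝ) = (q1 0 ω : ℝ) + A1 t ω - D1 t ω - A12 t ω)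
    -- at most one switched customer in station 2: D_{1|2}(t) ≤ A_{1|2}(t) ≤ D_{1|2}(t) + 1
    (hAD : ∀ t ≥ (0:ℝ), ∀ ω, D12 t ω ≤ A12 t ω ∧ A12 t ω ≤ D12 t ω + 1)
    -- departures of class-1 customers: D1(t) = N1(B1(t))
    (hD1 : ∀ t ≥ (0:ℝ), ∀ ω,
      D1 t ω = N1 (∫ u in (0:ℝ)..t, if 1 ≤ q1 u ω then (1:ℝ) else 0) ω)
    -- sandwich for switched departures: N_{1|2}(J_{1|2}(t)) ≤ D_{1|2}(t) ≤ N_{1|2}(I2(t))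
    (hD12 : ∀ t ≥ (0:ℝ), ∀ ω,
      N12 (∫ u in (0:ℝ)..t, if c1 < q1 u ω ∧ q2 u ω = 0 then (1:ℝ) else 0) ω ≤ D12 t ω ∧
      D12 t ω ≤ N12 (∫ u in (0:ℝ)..t, if q2 u ω = 0 then (1:ℝ) else 0) ω)
    -- almost sure rate limits
    (hA1lim : ∀ᵐ ω ∂P, Tendsto (fun t : ℝ => (A1 t ω : ℝ) / t) atTop (nhds lam1))
    (hN1lim : ∀ᵐ ω ∂P, Tendsto (fun t : ℝ => (N1 t ω : ℝ) / t) atTop (nhds mu1))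
    (hN12lim : ∀ᵐ ω ∂P, Tendsto (fun t : ℝ => (N12 t ω : ℝ) / t) atTop (nhds mu12))
    (hI2lim : ∀ᵐ ω ∂P,
      Tendsto (fun t : ℝ => (∫ u in (0:ℝ)..t, if q2 u ω = 0 then (1:ℝ) else 0) / t)
        atTop (nhds (1 - ρ2)))
    -- the additional hypothesis: the time-averaged probability that station 1 holds at most
    -- c1 customers vanishes
    (hq1prob : Tendsto
      (fun t : ℝ => (1 / t) * ∫ u in (0:ℝ)..t, (P {ω | q1 u ω ≤ c1}).toReal)
      atTop (nhds 0)) :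
    mu1 + mu12 * (1 - ρ2) ≤ lam1 := by
  classical
  have hq1u : ∀ ω, Measurable fun u : ℝ => q1 u ω := fun ω =>
    hq1meas.comp (measurable_id.prodMk measurable_const)
  have hq1ω : ∀ u : ℝ, Measurable fun ω => q1 u ω := fun u =>
    hq1meas.comp (measurable_const.prodMk measurable_id)
  set f : ℝ → Ω → ℝ := fun u ω => if q1 u ω ≤ c1 then (1:ℝ) else 0 with hfdef
  have hfmeas_u : ∀ ω, Measurable fun u => f u ω := fun ω =>
    Measurable.ite ((hq1u ω) measurableSet_Iic) measurable_const measurable_const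
  have hfbd : ∀ ω u, ‖f u ω‖ ≤ 1 := by
    intro ω u; simp only [hfdef]; split_ifs <;> simp
  have hfint : ∀ ω a b, IntervalIntegrable (fun u => f u ω) volume a b :=
    fun ω a b => bdd_intervalIntegrable (hfmeas_u ω) (hfbd ω) a b
  set F : ℝ → Ω → ℝ := fun t ω => ∫ u in (0:ℝ)..t, f u ω with hFdef
  have hFnonneg : ∀ t, 0 ≤ t → ∀ ω, 0 ≤ F t ω := by
    intro t ht ω
    apply intervalIntegral.integral_nonneg ht
    intro u _; simp only [hfdef]; split_ifs <;> norm_num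
  have hFle : ∀ t, 0 ≤ t → ∀ ω, F t ω ≤ t := by
    intro t ht ω
    calc F t ω ≤ ∫ u in (0:ℝ)..t, (1:ℝ) := by
          apply intervalIntegral.integral_mono_on ht (hfint ω 0 t)
            intervalIntegrable_const
          intro u _; simp only [hfdef]; split_ifs <;> norm_num
      _ = t := by simp
  have hFmeas : ∀ t : ℝ, 0 ≤ t → Measurable fun ω => F t ω := by
    intro t ht
    have hsm : StronglyMeasurable fun p : Ω × ℝ => f p.2 p.1 := by
      apply Measurable.stronglyMeasurable
      exact Measurable.ite ((hq1meas.comp measurable_swap) measurableSet_Iic)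
        measurable_const measurable_const
    have h2 := hsm.integral_prod_right' (ν := volume.restrict (Ioc (0:ℝ) t))
    have heq : (fun ω => F t ω)
        = fun ω => ∫ u, f u ω ∂(volume.restrict (Ioc (0:ℝ) t)) := by
      funext ω
      simp only [hFdef]
      rw [intervalIntegral.integral_of_le ht]
    rw [heq]; exact h2.measurable
  have hEF : ∀ n : ℕ, ∫ ω, F (n:ℝ) ω ∂P
      = ∫ u in (0:ℝ)..(n:ℝ), (P {ω | q1 u ω ≤ c1}).toReal := by
    intro n
    have hn : (0:ℝ) ≤ (n:ℝ) := Nat.cast_nonneg n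
    haveI : Fact (volume (Ioc (0:ℝ) (n:ℝ)) < ⊤) := ⟨measure_Ioc_lt_top⟩
    have hmprod : Measurable (Function.uncurry f) :=
      Measurable.ite (hq1meas measurableSet_Iic) measurable_const measurable_const
    have hintprod : Integrable (Function.uncurry f)
        ((volume.restrict (Ioc (0:ℝ) (n:ℝ))).prod P) := by
      refine (integrable_const (1:ℝ)).mono' hmprod.aestronglyMeasurable ?_
      exact Eventually.of_forall fun p => hfbd p.2 p.1
    have hswap := integral_integral_swap hintprod
    have hptw : ∀ u : ℝ, ∫ ω, f u ω ∂P = (P {ω | q1 u ω ≤ c1}).toReal := by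
      intro u
      have hms : MeasurableSet {ω | q1 u ω ≤ c1} := (hq1ω u) measurableSet_Iic
      have hind : (fun ω => f u ω) = ({ω | q1 u ω ≤ c1}).indicator fun _ => (1:ℝ) := by
        funext ω; simp [hfdef, Set.indicator_apply]
      rw [hind, integral_indicator_const (1:ℝ) hms, smul_eq_mul, mul_one]
      rfl
    calc ∫ ω, F (n:ℝ) ω ∂P
        = ∫ ω, ∫ u, f u ω ∂(volume.restrict (Ioc (0:ℝ) (n:ℝ))) ∂P := by
          congr 1; funext ω
          simp only [hFdef]; rw [intervalIntegral.integral_of_le hn]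
      _ = ∫ u, ∫ ω, f u ω ∂P ∂(volume.restrict (Ioc (0:ℝ) (n:ℝ))) := hswap.symm
      _ = ∫ u in (0:ℝ)..(n:ℝ), (P {ω | q1 u ω ≤ c1}).toReal := by
          rw [intervalIntegral.integral_of_le hn]
          exact integral_congr_ae (Eventually.of_forall hptw)
  have hFint : ∀ n : ℕ, Integrable (fun ω => F (n:ℝ) ω / (n:ℝ)) P := by
    intro n
    refine (integrable_const (1:ℝ)).mono'
      ((hFmeas (n:ℝ) (Nat.cast_nonneg n)).div_const _).aestronglyMeasurable ?_
    refine Eventually.of_forall fun ω => ?_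
    rcases Nat.eq_zero_or_pos n with h | h
    · simp [h]
    · have h0 : (0:ℝ) < (n:ℝ) := by exact_mod_cast h
      rw [Real.norm_eq_abs,
        abs_of_nonneg (div_nonneg (hFnonneg _ (Nat.cast_nonneg n) ω) h0.le)]
      exact (div_le_one h0).2 (hFle _ (Nat.cast_nonneg n) ω)
  have hgmeas : ∀ n : ℕ, Measurable fun ω => ENNReal.ofReal (F (n:ℝ) ω / (n:ℝ)) :=
    fun n => ((hFmeas (n:ℝ) (Nat.cast_nonneg n)).div_const _).ennreal_ofReal
  have hlint : ∀ n : ℕ, ∫⁻ ω, ENNReal.ofReal (F (n:ℝ) ω / (n:ℝ)) ∂P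
      = ENNReal.ofReal ((∫ ω, F (n:ℝ) ω ∂P) / (n:ℝ)) := by
    intro n
    rw [← ofReal_integral_eq_lintegral_ofReal (hFint n)
      (Eventually.of_forall fun ω =>
        div_nonneg (hFnonneg _ (Nat.cast_nonneg n) ω) (Nat.cast_nonneg n)),
      integral_div]
  have hseq : Tendsto (fun n : ℕ => (∫ ω, F (n:ℝ) ω ∂P) / (n:ℝ)) atTop (nhds 0) := by
    have h1 := hq1prob.comp (tendsto_natCast_atTop_atTop (R := ℝ))
    refine h1.congr fun n => ?_
    simp only [Function.comp_apply]
    rw [← hEF n]; ring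
  have hliminf0 : ∀ᵐ ω ∂P,
      liminf (fun n : ℕ => ENNReal.ofReal (F (n:ℝ) ω / (n:ℝ))) atTop = 0 := by
    have hle := lintegral_liminf_le (μ := P) (u := atTop) hgmeas
    have h2 : liminf (fun n : ℕ => ∫⁻ ω, ENNReal.ofReal (F (n:ℝ) ω / (n:ℝ)) ∂P) atTop
        = 0 := by
      have ht : Tendsto (fun n : ℕ => ∫⁻ ω, ENNReal.ofReal (F (n:ℝ) ω / (n:ℝ)) ∂P)
          atTop (nhds 0) := by
        simp_rw [hlint]
        simpa using ENNReal.tendsto_ofReal hseq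
      exact ht.liminf_eq
    rw [h2] at hle
    have hz : ∫⁻ ω, liminf (fun n : ℕ => ENNReal.ofReal (F (n:ℝ) ω / (n:ℝ))) atTop ∂P
        = 0 := le_antisymm hle (zero_le)
    have := (lintegral_eq_zero_iff (Measurable.liminf hgmeas)).1 hz
    filter_upwards [this] with ω hω using hω
  -- measurability of the other indicators in u, for fixed ω
  have hq2u : ∀ ω, Measurable fun u : ℝ => q2 u ω := fun ω =>
    hq2meas.comp (measurable_id.prodMk measurable_const)
  -- pick a good sample point ω
  haveI : (MeasureTheory.ae P).NeBot := ae_neBot.mpr (IsProbabilityMeasure.ne_zero P)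
  obtain ⟨ω, ⟨⟨⟨hA1ω, hN1ω⟩, hN12ω⟩, hI2ω⟩, hlim0ω⟩ :=
    ((((hA1lim.and hN1lim).and hN12lim).and hI2lim).and hliminf0).exists
  -- interval integrability of the other indicator integrands for this ω
  have hg1int : ∀ a b : ℝ, IntervalIntegrable
      (fun u => if 1 ≤ q1 u ω then (1:ℝ) else 0) volume a b := by
    intro a b
    refine bdd_intervalIntegrable
      (Measurable.ite ((hq1u ω) measurableSet_Ici) measurable_const measurable_const)
      (fun u => by split_ifs <;> simp) a b
  have hg2int : ∀ a b : ℝ, IntervalIntegrable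
      (fun u => if q2 u ω = 0 then (1:ℝ) else 0) volume a b := by
    intro a b
    refine bdd_intervalIntegrable
      (Measurable.ite ((hq2u ω) (measurableSet_singleton 0)) measurable_const
        measurable_const)
      (fun u => by split_ifs <;> simp) a b
  have hg3int : ∀ a b : ℝ, IntervalIntegrable
      (fun u => if c1 < q1 u ω ∧ q2 u ω = 0 then (1:ℝ) else 0) volume a b := by
    intro a b
    have hms : MeasurableSet {u : ℝ | c1 < q1 u ω ∧ q2 u ω = 0} :=
      ((hq1u ω) measurableSet_Ioi).inter ((hq2u ω) (measurableSet_singleton 0))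
    refine bdd_intervalIntegrable
      (Measurable.ite hms measurable_const measurable_const)
      (fun u => by split_ifs <;> simp) a b
  -- the key inequality for each small η
  have key : ∀ η : ℝ, 0 < η → η < mu1 → η < mu12 → 2 * η < 1 - ρ2 → η < 1 →
      (mu1 - η) * (1 - η) + (mu12 - η) * (1 - ρ2 - 2 * η) - η ≤ lam1 + η := by
    intro η hη hηmu1 hηmu12 hηρ hη1
    obtain ⟨T1, hT1⟩ := eventually_atTop.1
      (hA1ω.eventually (eventually_lt_nhds (by linarith : lam1 < lam1 + η)))
    obtain ⟨S1, hS1⟩ := eventually_atTop.1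
      (hN1ω.eventually (eventually_gt_nhds (by linarith : mu1 - η < mu1)))
    obtain ⟨S2, hS2⟩ := eventually_atTop.1
      (hN12ω.eventually (eventually_gt_nhds (by linarith : mu12 - η < mu12)))
    obtain ⟨T2, hT2⟩ := eventually_atTop.1
      (hI2ω.eventually (eventually_gt_nhds (by linarith : 1 - ρ2 - η < 1 - ρ2)))
    have hfreq : ∃ᶠ n : ℕ in atTop,
        ENNReal.ofReal (F (n:ℝ) ω / (n:ℝ)) < ENNReal.ofReal η := by
      have hlt : liminf (fun n : ℕ => ENNReal.ofReal (F (n:ℝ) ω / (n:ℝ))) atTop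
          < ENNReal.ofReal η := by
        rw [hlim0ω]; exact ENNReal.ofReal_pos.2 hη
      exact frequently_lt_of_liminf_lt
        (isCoboundedUnder_ge_of_eventually_le atTop
          (Eventually.of_forall fun n => le_top)) hlt
    have hnat := tendsto_natCast_atTop_atTop (R := ℝ)
    have h1η : (0:ℝ) < 1 - η := by linarith
    have hρη : (0:ℝ) < 1 - ρ2 - 2 * η := by linarith
    have hev : ∀ᶠ n : ℕ in atTop, T1 ≤ (n:ℝ) ∧ T2 ≤ (n:ℝ) ∧ S1 ≤ (1 - η) * (n:ℝ) ∧
        S2 ≤ (1 - ρ2 - 2 * η) * (n:ℝ) ∧ (q1 0 ω : ℝ) ≤ η * (n:ℝ) ∧ 1 ≤ (n:ℝ) := by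
      have e3 : ∀ᶠ n : ℕ in atTop, S1 ≤ (1 - η) * (n:ℝ) := by
        filter_upwards [hnat.eventually_ge_atTop (S1 / (1 - η))] with n hn
        rw [mul_comm]; exact (div_le_iff₀ h1η).1 hn
      have e4 : ∀ᶠ n : ℕ in atTop, S2 ≤ (1 - ρ2 - 2 * η) * (n:ℝ) := by
        filter_upwards [hnat.eventually_ge_atTop (S2 / (1 - ρ2 - 2 * η))] with n hn
        rw [mul_comm]; exact (div_le_iff₀ hρη).1 hn
      have e5 : ∀ᶠ n : ℕ in atTop, (q1 0 ω : ℝ) ≤ η * (n:ℝ) := by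
        filter_upwards [hnat.eventually_ge_atTop ((q1 0 ω : ℝ) / η)] with n hn
        rw [mul_comm]; exact (div_le_iff₀ hη).1 hn
      filter_upwards [hnat.eventually_ge_atTop T1, hnat.eventually_ge_atTop T2, e3, e4,
        e5, hnat.eventually_ge_atTop 1] with n h1 h2 h3 h4 h5 h6
      exact ⟨h1, h2, h3, h4, h5, h6⟩
    obtain ⟨n, hfn, hT1n, hT2n, hS1n, hS2n, hq0n, h1n⟩ := (hfreq.and_eventually hev).exists
    set t : ℝ := (n:ℝ) with htdef
    have ht0 : (0:ℝ) < t := lt_of_lt_of_le one_pos h1n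
    have hFn : F t ω < η * t := by
      have hlt : F t ω / t < η := (ENNReal.ofReal_lt_ofReal_iff hη).1 hfn
      have := (div_lt_iff₀ ht0).1 hlt
      linarith [this]
    have hFtle : F t ω ≤ t := hFle t ht0.le ω
    -- the three occupation integrals at time t
    set B : ℝ := ∫ u in (0:ℝ)..t, if 1 ≤ q1 u ω then (1:ℝ) else 0 with hBdef
    set I2v : ℝ := ∫ u in (0:ℝ)..t, if q2 u ω = 0 then (1:ℝ) else 0 with hI2def
    set Jv : ℝ := ∫ u in (0:ℝ)..t, if c1 < q1 u ω ∧ q2 u ω = 0 then (1:ℝ) else 0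
      with hJdef
    have hB0 : 0 ≤ B := by
      rw [hBdef]
      apply intervalIntegral.integral_nonneg ht0.le
      intro u _; split_ifs <;> norm_num
    have hJ0 : 0 ≤ Jv := by
      rw [hJdef]
      apply intervalIntegral.integral_nonneg ht0.le
      intro u _; split_ifs <;> norm_num
    have hB_ge : t - F t ω ≤ B := by
      have hsub : t - F t ω = ∫ u in (0:ℝ)..t, ((1:ℝ) - f u ω) := by
        rw [intervalIntegral.integral_sub intervalIntegrable_const (hfint ω 0 t)]
        simp [hFdef]
      rw [hsub, hBdef]
      apply intervalIntegral.integral_mono_on ht0.le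
        (intervalIntegrable_const.sub (hfint ω 0 t)) (hg1int 0 t)
      intro u _
      simp only [hfdef]
      by_cases h : 1 ≤ q1 u ω
      · simp only [h, if_true]; split_ifs <;> norm_num
      · have h0 : q1 u ω = 0 := Nat.lt_one_iff.1 (not_le.1 h)
        simp [h, h0, Nat.zero_le]
    have hJ_ge : I2v - F t ω ≤ Jv := by
      have hsub : I2v - F t ω
          = ∫ u in (0:ℝ)..t, ((if q2 u ω = 0 then (1:ℝ) else 0) - f u ω) := by
        rw [intervalIntegral.integral_sub (hg2int 0 t) (hfint ω 0 t)]
      rw [hsub, hJdef]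
      apply intervalIntegral.integral_mono_on ht0.le
        ((hg2int 0 t).sub (hfint ω 0 t)) (hg3int 0 t)
      intro u _
      simp only [hfdef]
      by_cases h2 : q2 u ω = 0
      · by_cases h1 : q1 u ω ≤ c1
        · simp [h1, h2, not_lt.mpr h1]
        · simp [h1, h2, not_le.1 h1]
      · have : ¬ (c1 < q1 u ω ∧ q2 u ω = 0) := fun hc => h2 hc.2
        simp [h2, this]
        split_ifs <;> norm_num
    -- lower bound for I2v
    have hI2low : (1 - ρ2 - η) * t < I2v := (lt_div_iff₀ ht0).1 (hT2 t hT2n)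
    -- the two service arguments
    have hs1low : (1 - η) * t ≤ t - F t ω := by linarith
    have hs1pos : 0 < t - F t ω := lt_of_lt_of_le (mul_pos h1η ht0) hs1low
    have hs2low : (1 - ρ2 - 2 * η) * t ≤ I2v - F t ω := by linarith
    have hs2pos : 0 < I2v - F t ω := lt_of_lt_of_le (mul_pos hρη ht0) hs2low
    have hr1 : (mu1 - η) * (t - F t ω) < (N1 (t - F t ω) ω : ℝ) := by
      have := hS1 (t - F t ω) (le_trans hS1n hs1low)
      exact (lt_div_iff₀ hs1pos).1 this
    have hr2 : (mu12 - η) * (I2v - F t ω) < (N12 (I2v - F t ω) ω : ℝ) := by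
      have := hS2 (I2v - F t ω) (le_trans hS2n hs2low)
      exact (lt_div_iff₀ hs2pos).1 this
    -- monotonicity of N1, N12
    have hm1 : (N1 (t - F t ω) ω : ℝ) ≤ (N1 B ω : ℝ) := by
      exact_mod_cast Nat.cast_le.2
        (hN1mono ω (mem_Ici.2 hs1pos.le) (mem_Ici.2 hB0) hB_ge)
    have hm2 : (N12 (I2v - F t ω) ω : ℝ) ≤ (N12 Jv ω : ℝ) := by
      exact_mod_cast Nat.cast_le.2
        (hN12mono ω (mem_Ici.2 hs2pos.le) (mem_Ici.2 hJ0) hJ_ge)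
    -- flow balance and the departure identities
    have hfl := hflow t ht0.le ω
    have hqnn : (0:ℝ) ≤ (q1 t ω : ℝ) := Nat.cast_nonneg _
    have hD1t : (D1 t ω : ℝ) = (N1 B ω : ℝ) := by
      have h := hD1 t ht0.le ω
      rw [← hBdef] at h
      exact_mod_cast h
    have hADc : (D12 t ω : ℝ) ≤ (A12 t ω : ℝ) := by
      exact_mod_cast (hAD t ht0.le ω).1
    have hD12c : (N12 Jv ω : ℝ) ≤ (D12 t ω : ℝ) := by
      have h := (hD12 t ht0.le ω).1
      rw [← hJdef] at h
      exact_mod_cast h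
    have hA1up : (A1 t ω : ℝ) < (lam1 + η) * t := (div_lt_iff₀ ht0).1 (hT1 t hT1n)
    -- product lower bounds
    have hp1 : (mu1 - η) * ((1 - η) * t) ≤ (mu1 - η) * (t - F t ω) :=
      mul_le_mul_of_nonneg_left hs1low (by linarith)
    have hp2 : (mu12 - η) * ((1 - ρ2 - 2 * η) * t) ≤ (mu12 - η) * (I2v - F t ω) :=
      mul_le_mul_of_nonneg_left hs2low (by linarith)
    have hring : ((mu1 - η) * (1 - η) + (mu12 - η) * (1 - ρ2 - 2 * η) - η) * t
        = (mu1 - η) * ((1 - η) * t) + (mu12 - η) * ((1 - ρ2 - 2 * η) * t) - η * t := by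
      ring
    have hmain : ((mu1 - η) * (1 - η) + (mu12 - η) * (1 - ρ2 - 2 * η) - η) * t
        ≤ (lam1 + η) * t := by
      rw [hring]
      linarith
    exact le_of_mul_le_mul_right hmain ht0
  -- let η → 0 along a sequence
  set M : ℝ := min (min mu1 mu12) (min ((1 - ρ2) / 2) 1) with hM
  have hM0 : 0 < M := lt_min (lt_min hmu1 hmu12) (lt_min (by linarith) one_pos)
  have hMmu1 : M ≤ mu1 := le_trans (min_le_left _ _) (min_le_left _ _)
  have hMmu12 : M ≤ mu12 := le_trans (min_le_left _ _) (min_le_right _ _)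
  have hMρ : M ≤ (1 - ρ2) / 2 := le_trans (min_le_right _ _) (min_le_left _ _)
  have hM1 : M ≤ 1 := le_trans (min_le_right _ _) (min_le_right _ _)
  set seq : ℕ → ℝ := fun k => (M / 2) / ((k:ℝ) + 1) with hseqdef
  have hseqpos : ∀ k, 0 < seq k := fun k =>
    div_pos (by linarith) (by positivity)
  have hseqle : ∀ k, seq k ≤ M / 2 := fun k =>
    div_le_self (by linarith) (by
      have : (0:ℝ) ≤ (k:ℝ) := Nat.cast_nonneg k
      linarith)
  have hseq0 : Tendsto seq atTop (nhds 0) := by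
    have hg : Tendsto (fun k : ℕ => (k:ℝ) + 1) atTop atTop :=
      tendsto_atTop_add_const_right _ 1 (tendsto_natCast_atTop_atTop (R := ℝ))
    exact Tendsto.div_atTop tendsto_const_nhds hg
  have hkey : ∀ k : ℕ, (mu1 - seq k) * (1 - seq k)
      + (mu12 - seq k) * (1 - ρ2 - 2 * seq k) - seq k ≤ lam1 + seq k := by
    intro k
    have h := hseqle k
    exact key (seq k) (hseqpos k) (by linarith) (by linarith) (by linarith) (by linarith)
  have hL : Tendsto (fun k : ℕ => (mu1 - seq k) * (1 - seq k)
      + (mu12 - seq k) * (1 - ρ2 - 2 * seq k) - seq k) atTop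
      (nhds (mu1 + mu12 * (1 - ρ2))) := by
    have h : Tendsto (fun k : ℕ => (mu1 - seq k) * (1 - seq k)
        + (mu12 - seq k) * (1 - ρ2 - 2 * seq k) - seq k) atTop
        (nhds ((mu1 - 0) * (1 - 0) + (mu12 - 0) * (1 - ρ2 - 2 * 0) - 0)) :=
      (((tendsto_const_nhds.sub hseq0).mul (tendsto_const_nhds.sub hseq0)).add
        ((tendsto_const_nhds.sub hseq0).mul
          (tendsto_const_nhds.sub (hseq0.const_mul 2)))).sub hseq0
    simpa using h
  have hR : Tendsto (fun k : ℕ => lam1 + seq k) atTop (nhds lam1) := by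
    simpa using tendsto_const_nhds.add hseq0
  exact le_of_tendsto_of_tendsto' hL hR hkey
end

section
/- Suppose ρ2 < 1, almost surely I2(t)/t → 1 − ρ2 as t → ∞, and lim_{t→∞} (1/t)∫_0^t P(q1(u) ≤ c1) du = 0. Then there exists a sequence s_n → ∞ of nonnegative reals such that almost surely lim_{n→∞} D_{1|2}(s_n)/s_n = lim_{n→∞} A_{1|2}(s_n)/s_n = μ_{1|2}(1 − ρ2). (Equation (4.14) of the paper: the exact long-run switching rate along a subsequence.) -/
open MeasureTheory ProbabilityTheory Filter Set

section Aux
open Topology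
open scoped ENNReal NNReal

private lemma renewal_aux {T : ℕ → ℝ} (hT0 : T 0 = 0)
    {m : ℝ} (hm : 0 < m) (hlim : Tendsto (fun n : ℕ => T n / n) atTop (𝓝 m)) :
    Tendsto (fun t : ℝ => ((sSup {n : ℕ | T n ≤ t} : ℕ) : ℝ) / t) atTop (𝓝 m⁻¹) := by
  set Nf : ℝ → ℕ := fun t => sSup {n : ℕ | T n ≤ t} with hNf
  have hTtop : Tendsto T atTop atTop := by
    have h1 : Tendsto (fun n : ℕ => (T n / n) * n) atTop atTop :=
      hlim.pos_mul_atTop hm tendsto_natCast_atTop_atTop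
    refine h1.congr' ?_
    filter_upwards [eventually_ge_atTop 1] with n hn
    have : (n : ℝ) ≠ 0 := by positivity
    field_simp
  have hbdd : ∀ t : ℝ, BddAbove {n : ℕ | T n ≤ t} := by
    intro t
    obtain ⟨k, hk⟩ := (hTtop.eventually_gt_atTop t).exists_forall_of_atTop
    refine ⟨k, fun n hn => ?_⟩
    by_contra h
    exact absurd hn (not_le.2 (hk n (le_of_not_ge h)))
  have hne : ∀ t : ℝ, 0 ≤ t → (0 : ℕ) ∈ {n : ℕ | T n ≤ t} := fun t ht => by simp [hT0, ht]
  have hmem : ∀ t : ℝ, 0 ≤ t → T (Nf t) ≤ t := fun t ht =>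
    Nat.sSup_mem ⟨0, hne t ht⟩ (hbdd t)
  have hsucc : ∀ t : ℝ, t < T (Nf t + 1) := by
    intro t
    by_contra h
    have hmem' : Nf t + 1 ∈ {n : ℕ | T n ≤ t} := le_of_not_gt h
    have h2 := le_csSup (hbdd t) hmem'
    have h3 : sSup {n : ℕ | T n ≤ t} = Nf t := rfl
    rw [h3] at h2
    omega
  have hNtop : Tendsto Nf atTop atTop := by
    rw [tendsto_atTop]
    intro k
    filter_upwards [eventually_ge_atTop (T k)] with t ht
    exact le_csSup (hbdd t) ht
  have hg : Tendsto (fun t : ℝ => T (Nf t) / (Nf t : ℝ)) atTop (𝓝 m) := hlim.comp hNtop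
  have h1 : Tendsto (fun t : ℝ => T (Nf t + 1) / ((Nf t + 1 : ℕ) : ℝ)) atTop (𝓝 m) :=
    hlim.comp ((tendsto_add_atTop_nat 1).comp hNtop)
  have hinv : Tendsto (fun t : ℝ => ((Nf t : ℝ))⁻¹) atTop (𝓝 0) :=
    tendsto_inv_atTop_zero.comp (tendsto_natCast_atTop_atTop.comp hNtop)
  have h2 : Tendsto (fun t : ℝ => ((Nf t + 1 : ℕ) : ℝ) / (Nf t : ℝ)) atTop (𝓝 1) := by
    have h3 := (tendsto_const_nhds (x := (1:ℝ)) (f := atTop)).add hinv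
    rw [add_zero] at h3
    refine h3.congr' ?_
    filter_upwards [hNtop.eventually_ge_atTop 1] with t ht
    have hpos : (0:ℝ) < (Nf t : ℝ) := by exact_mod_cast ht
    push_cast
    field_simp
  have hh : Tendsto (fun t : ℝ =>
      (T (Nf t + 1) / ((Nf t + 1 : ℕ) : ℝ)) * (((Nf t + 1 : ℕ) : ℝ) / (Nf t : ℝ)))
      atTop (𝓝 m) := by
    have h4 := h1.mul h2
    rwa [mul_one] at h4
  have hf : Tendsto (fun t : ℝ => t / (Nf t : ℝ)) atTop (𝓝 m) := by
    refine tendsto_of_tendsto_of_tendsto_of_le_of_le' hg hh ?_ ?_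
    · filter_upwards [hNtop.eventually_ge_atTop 1, eventually_ge_atTop (0:ℝ)] with t ht ht0
      have hpos : (0:ℝ) < (Nf t : ℝ) := by exact_mod_cast ht
      exact div_le_div_of_nonneg_right (hmem t ht0) hpos.le
    · filter_upwards [hNtop.eventually_ge_atTop 1] with t ht
      have hpos : (0:ℝ) < (Nf t : ℝ) := by exact_mod_cast ht
      have hpos1 : (0:ℝ) < ((Nf t + 1 : ℕ) : ℝ) := by positivity
      have heq : (T (Nf t + 1) / ((Nf t + 1 : ℕ) : ℝ)) * (((Nf t + 1 : ℕ) : ℝ) / (Nf t : ℝ))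
          = T (Nf t + 1) / (Nf t : ℝ) := by
        field_simp
      rw [heq]
      exact div_le_div_of_nonneg_right (le_of_lt (hsucc t)) hpos.le
  have hfinal := hf.inv₀ hm.ne'
  refine hfinal.congr (fun t => ?_)
  rw [inv_div]

private lemma II_bounded_aux {f : ℝ → ℝ} (hf : Measurable f) (hb : ∀ u, ‖f u‖ ≤ 1) (a b : ℝ) :
    IntervalIntegrable f volume a b := by
  rw [intervalIntegrable_iff]
  have hc : IntegrableOn (fun _ : ℝ => (1:ℝ)) (Set.uIoc a b) volume := by
    apply (integrableOn_const_iff (C := (1:ℝ))).mpr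
    right
    rw [Set.uIoc]
    exact measure_Ioc_lt_top
  exact hc.mono' hf.aestronglyMeasurable.restrict (Eventually.of_forall hb)

private lemma fubini_aux {Ω : Type*} [MeasurableSpace Ω] (P : Measure Ω) [IsProbabilityMeasure P]
    (c1 : ℕ) (q1 q2 : ℝ → Ω → ℕ)
    (hq1meas : Measurable (Function.uncurry q1)) (hq2meas : Measurable (Function.uncurry q2))
    (s : ℕ → ℝ) (hs_pos : ∀ n, 0 < s n)
    (hbound : ∀ n, (∫ u in (0:ℝ)..(s n), (P {ω | q1 u ω ≤ c1}).toReal) ≤ s n * (1/2)^n) :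
    ∀ᵐ ω ∂P, Tendsto (fun n => (∫ u in (0:ℝ)..(s n),
        if q1 u ω ≤ c1 ∧ q2 u ω = 0 then (1:ℝ) else 0) / s n) atTop (𝓝 0) := by
  classical
  set S : Set (ℝ × Ω) := {p | q1 p.1 p.2 ≤ c1 ∧ q2 p.1 p.2 = 0} with hS
  have hSmeas : MeasurableSet S := by
    have h1 : MeasurableSet {p : ℝ × Ω | q1 p.1 p.2 ≤ c1} :=
      hq1meas (measurableSet_Iic (a := c1))
    have h2 : MeasurableSet {p : ℝ × Ω | q2 p.1 p.2 = 0} :=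
      hq2meas (MeasurableSet.singleton 0)
    exact h1.inter h2
  set G : ℝ → Ω → ℝ≥0∞ := fun u ω => if q1 u ω ≤ c1 ∧ q2 u ω = 0 then 1 else 0 with hG
  have hGmeas : Measurable (Function.uncurry G) := by
    have : Function.uncurry G = S.indicator (fun _ => (1:ℝ≥0∞)) := by
      ext p
      by_cases h : p ∈ S
      · simp [Function.uncurry, hG, indicator_of_mem h, h.1, h.2, hS]
      · have h' : ¬(q1 p.1 p.2 ≤ c1 ∧ q2 p.1 p.2 = 0) := h
        simp [Function.uncurry, hG, indicator_of_notMem h, h']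
    rw [this]
    exact measurable_const.indicator hSmeas
  have hGsec : ∀ ω, Measurable (fun u => G u ω) := by
    intro ω
    exact hGmeas.comp (measurable_id.prodMk measurable_const)
  set L : ℝ → Ω → ℝ≥0∞ := fun t ω => ∫⁻ u in Ioc (0:ℝ) t, G u ω with hL
  have hclaim1 : ∀ t : ℝ, 0 ≤ t → ∀ ω, (∫ u in (0:ℝ)..t,
      if q1 u ω ≤ c1 ∧ q2 u ω = 0 then (1:ℝ) else 0) = (L t ω).toReal := by
    intro t ht ω
    rw [intervalIntegral.integral_of_le ht, hL]
    rw [← integral_toReal ((hGsec ω).aemeasurable.restrict)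
      (Eventually.of_forall fun u => by
        by_cases h : q1 u ω ≤ c1 ∧ q2 u ω = 0 <;> simp [hG, h])]
    congr 1
    ext u
    by_cases h : q1 u ω ≤ c1 ∧ q2 u ω = 0 <;> simp [hG, h]
  have hmeasL : ∀ t, Measurable (fun ω => L t ω) := by
    intro t
    exact Measurable.lintegral_prod_left hGmeas
  have hpmeas : Measurable (fun u : ℝ => P {ω | q1 u ω ≤ c1}) := by
    have h1 : MeasurableSet {p : ℝ × Ω | q1 p.1 p.2 ≤ c1} :=
      hq1meas (measurableSet_Iic (a := c1))
    exact measurable_measure_prodMk_left h1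
  have hexp : ∀ n, ∫⁻ ω, L (s n) ω ∂P ≤ ENNReal.ofReal ((s n) * (1/2)^n) := by
    intro n
    have ht : (0:ℝ) ≤ s n := (hs_pos n).le
    have hswap : ∫⁻ ω, L (s n) ω ∂P = ∫⁻ u in Ioc (0:ℝ) (s n), ∫⁻ ω, G u ω ∂P := by
      exact lintegral_lintegral_swap (f := fun ω u => G u ω)
        ((hGmeas.comp measurable_swap).aemeasurable)
    have hinner : ∀ u : ℝ, ∫⁻ ω, G u ω ∂P ≤ P {ω | q1 u ω ≤ c1} := by
      intro u
      have hset : MeasurableSet {ω | q1 u ω ≤ c1 ∧ q2 u ω = 0} :=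
        hSmeas.preimage (measurable_prodMk_left (x := u))
      have heq : ∫⁻ ω, G u ω ∂P = P {ω | q1 u ω ≤ c1 ∧ q2 u ω = 0} := by
        rw [← lintegral_indicator_one hset]
        congr 1
        ext ω
        by_cases h : q1 u ω ≤ c1 ∧ q2 u ω = 0 <;> simp [hG, h]
      rw [heq]
      exact measure_mono (fun ω h => h.1)
    have hmid : (∫⁻ u in Ioc (0:ℝ) (s n), P {ω | q1 u ω ≤ c1})
        = ENNReal.ofReal (∫ u in (0:ℝ)..(s n), (P {ω | q1 u ω ≤ c1}).toReal) := by
      rw [intervalIntegral.integral_of_le ht,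
        integral_toReal (hpmeas.aemeasurable.restrict)
          (Eventually.of_forall fun u => measure_lt_top P _),
        ENNReal.ofReal_toReal]
      refine ne_top_of_le_ne_top ?_ (lintegral_mono fun u => prob_le_one)
      simp [lintegral_one]
    calc ∫⁻ ω, L (s n) ω ∂P = ∫⁻ u in Ioc (0:ℝ) (s n), ∫⁻ ω, G u ω ∂P := hswap
      _ ≤ ∫⁻ u in Ioc (0:ℝ) (s n), P {ω | q1 u ω ≤ c1} := lintegral_mono hinner
      _ = ENNReal.ofReal (∫ u in (0:ℝ)..(s n), (P {ω | q1 u ω ≤ c1}).toReal) := hmid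
      _ ≤ ENNReal.ofReal ((s n) * (1/2)^n) := ENNReal.ofReal_le_ofReal (hbound n)
  set W : ℕ → Ω → ℝ≥0∞ := fun n ω => L (s n) ω * (ENNReal.ofReal (s n))⁻¹ with hW
  have hWmeas : ∀ n, Measurable (W n) := fun n => (hmeasL (s n)).mul_const _
  have hne0 : ∀ n, ENNReal.ofReal (s n) ≠ 0 := fun n =>
    (ENNReal.ofReal_pos.mpr (hs_pos n)).ne'
  have hnetop : ∀ n, ENNReal.ofReal (s n) ≠ ⊤ := fun n => ENNReal.ofReal_ne_top
  have hWint : ∀ n, ∫⁻ ω, W n ω ∂P ≤ ENNReal.ofReal ((1/2)^n) := by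
    intro n
    rw [hW]
    simp only
    rw [lintegral_mul_const' _ _ (ENNReal.inv_ne_top.mpr (hne0 n))]
    calc (∫⁻ ω, L (s n) ω ∂P) * (ENNReal.ofReal (s n))⁻¹
        ≤ ENNReal.ofReal ((s n) * (1/2)^n) * (ENNReal.ofReal (s n))⁻¹ :=
          mul_le_mul_left (hexp n) _
      _ = ENNReal.ofReal ((1/2)^n) := by
          rw [ENNReal.ofReal_mul (hs_pos n).le, mul_right_comm,
            ENNReal.mul_inv_cancel (hne0 n) (hnetop n), one_mul]
  have htsum : ∑' n, ∫⁻ ω, W n ω ∂P ≠ ⊤ := by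
    refine ne_top_of_le_ne_top ?_ (ENNReal.tsum_le_tsum hWint)
    have heq : ∀ n : ℕ, ENNReal.ofReal ((1/2:ℝ)^n) = (ENNReal.ofReal (1/2))^n :=
      fun n => ENNReal.ofReal_pow (by norm_num) n
    rw [tsum_congr heq, ENNReal.tsum_geometric]
    refine ENNReal.inv_ne_top.mpr ?_
    have hlt : ENNReal.ofReal (1/2 : ℝ) < 1 := by
      rw [ENNReal.ofReal_lt_one]
      norm_num
    rw [Ne, tsub_eq_zero_iff_le]
    exact not_le.mpr hlt
  have hsum_ae : ∀ᵐ ω ∂P, ∑' n, W n ω < ∞ := by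
    refine ae_lt_top (Measurable.ennreal_tsum hWmeas) ?_
    rw [lintegral_tsum (fun n => (hWmeas n).aemeasurable)]
    exact htsum
  filter_upwards [hsum_ae] with ω hω
  have hW0 : Tendsto (fun n => W n ω) atTop (𝓝 0) :=
    ENNReal.tendsto_atTop_zero_of_tsum_ne_top hω.ne
  have htr := (ENNReal.tendsto_toReal (a := 0) (by simp)).comp hW0
  refine Tendsto.congr (fun n => ?_) (by simpa using htr)
  show (W n ω).toReal = _
  rw [hclaim1 (s n) (hs_pos n).le ω, hW]
  simp only
  rw [ENNReal.toReal_mul, ENNReal.toReal_inv, ENNReal.toReal_ofReal (hs_pos n).le,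
    div_eq_mul_inv]

end Aux

/-- equation (4.14) of the paper: the exact long-run switching rate along a
subsequence.  With the setup of Lemma 4.2 — queue lengths `q1, q2` jointly measurable,
`I2 t ω = ∫_0^t 1(q2 u ω = 0) du`, `J_{1|2} t ω = ∫_0^t 1(q1 u ω > c1 ∧ q2 u ω = 0) du`,
`(τ ℓ)` i.i.d. strictly positive integrable service times with mean `1/μ_{1|2}`, `N` the
associated counting process, and `A_{1|2}, D_{1|2}` satisfying the sandwich
`N (J_{1|2} t) ≤ D_{1|2} t ≤ N (I2 t)` and `D_{1|2} t ≤ A_{1|2} t ≤ D_{1|2} t + 1` —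
if `ρ2 < 1`, almost surely `I2 t / t → 1 − ρ2`, and `(1/t) ∫_0^t P(q1 u ≤ c1) du → 0`,
then there is a sequence of nonnegative reals `s n → ∞` along which, almost surely,
`D_{1|2} (s n) / s n → μ_{1|2} (1 − ρ2)` and `A_{1|2} (s n) / s n → μ_{1|2} (1 − ρ2)`. -/
theorem switching_rate_along_subsequence
    {Ω : Type*} [MeasurableSpace Ω] (P : Measure Ω) [IsProbabilityMeasure P]
    (mu12 ρ2 : ℝ) (c1 : ℕ) (hmu12 : 0 < mu12)
    (hρ2_nonneg : 0 ≤ ρ2) (hρ2_lt : ρ2 < 1) (hc1 : 1 ≤ c1)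
    (q1 q2 : ℝ → Ω → ℕ)
    (hq1meas : Measurable (Function.uncurry q1))
    (hq2meas : Measurable (Function.uncurry q2))
    (τ : ℕ → Ω → ℝ)
    (hτmeas : ∀ ℓ, Measurable (τ ℓ))
    (hindep : iIndepFun τ P)
    (hident : ∀ ℓ, IdentDistrib (τ ℓ) (τ 0) P P)
    (hpos : ∀ ℓ ω, 0 < τ ℓ ω)
    (hint : Integrable (τ 0) P)
    (hmean : ∫ ω, τ 0 ω ∂P = 1 / mu12)
    (N : ℝ → Ω → ℕ)
    (hN : ∀ t ω, N t ω = sSup {n : ℕ | ∑ ℓ ∈ Finset.range n, τ ℓ ω ≤ t})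
    (A12 D12 : ℝ → Ω → ℕ)
    (hD12 : ∀ t ≥ (0:ℝ), ∀ ω,
      N (∫ u in (0:ℝ)..t, if c1 < q1 u ω ∧ q2 u ω = 0 then (1:ℝ) else 0) ω ≤ D12 t ω ∧
      D12 t ω ≤ N (∫ u in (0:ℝ)..t, if q2 u ω = 0 then (1:ℝ) else 0) ω)
    (hAD : ∀ t ≥ (0:ℝ), ∀ ω, D12 t ω ≤ A12 t ω ∧ A12 t ω ≤ D12 t ω + 1)
    (hI2lim : ∀ᵐ ω ∂P,
      Tendsto (fun t : ℝ => (∫ u in (0:ℝ)..t, if q2 u ω = 0 then (1:ℝ) else 0) / t)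
        atTop (nhds (1 - ρ2)))
    (hq1prob : Tendsto
      (fun t : ℝ => (1 / t) * ∫ u in (0:ℝ)..t, (P {ω | q1 u ω ≤ c1}).toReal)
      atTop (nhds 0)) :
    ∃ s : ℕ → ℝ, (∀ n, 0 ≤ s n) ∧ Tendsto s atTop atTop ∧
      ∀ᵐ ω ∂P,
        Tendsto (fun n => (D12 (s n) ω : ℝ) / s n) atTop (nhds (mu12 * (1 - ρ2))) ∧
        Tendsto (fun n => (A12 (s n) ω : ℝ) / s n) atTop (nhds (mu12 * (1 - ρ2))) := by
  classical
  -- choose the subsequence of times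
  have hchoice : ∀ n : ℕ, ∃ t : ℝ, ((n:ℝ) + 1 ≤ t ∧
      (∫ u in (0:ℝ)..t, (P {ω | q1 u ω ≤ c1}).toReal) ≤ t * (1/2)^n) := by
    intro n
    have hev : ∀ᶠ t : ℝ in atTop,
        (1 / t) * ∫ u in (0:ℝ)..t, (P {ω | q1 u ω ≤ c1}).toReal < (1/2)^n :=
      hq1prob.eventually (gt_mem_nhds (by positivity))
    obtain ⟨t, ht1, ht2⟩ := (hev.and (eventually_ge_atTop ((n:ℝ)+1))).exists
    refine ⟨t, ht2, ?_⟩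
    have htpos : (0:ℝ) < t := lt_of_lt_of_le (by positivity) ht2
    calc (∫ u in (0:ℝ)..t, (P {ω | q1 u ω ≤ c1}).toReal)
        = t * ((1/t) * ∫ u in (0:ℝ)..t, (P {ω | q1 u ω ≤ c1}).toReal) := by
          field_simp
      _ ≤ t * (1/2)^n := mul_le_mul_of_nonneg_left ht1.le htpos.le
  choose s hs1 hs2 using hchoice
  have hs_pos : ∀ n, 0 < s n := fun n => lt_of_lt_of_le (by positivity) (hs1 n)
  have hs_top : Tendsto s atTop atTop :=
    tendsto_atTop_mono hs1
      (tendsto_atTop_add_const_right _ 1 tendsto_natCast_atTop_atTop)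
  refine ⟨s, fun n => (hs_pos n).le, hs_top, ?_⟩
  -- strong law of large numbers for partial sums
  have hpair : Pairwise (Function.onFun (IndepFun · · P) τ) := fun i j hij => hindep.indepFun hij
  have hslln := ProbabilityTheory.strong_law_ae τ hint hpair hident
  rw [hmean] at hslln
  have hkey := fubini_aux P c1 q1 q2 hq1meas hq2meas s hs_pos hs2
  filter_upwards [hslln, hI2lim, hkey] with ω hωs hωI hωX
  have h1ρ : (0:ℝ) < 1 - ρ2 := by linarith
  -- renewal behaviour of N at ω
  have hlimT : Tendsto (fun n : ℕ => (∑ ℓ ∈ Finset.range n, τ ℓ ω) / n) atTop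
      (nhds (1/mu12)) := by
    refine hωs.congr (fun n => ?_)
    rw [smul_eq_mul, inv_mul_eq_div]
  have hm : (0:ℝ) < 1/mu12 := by positivity
  have hren := renewal_aux (T := fun n => ∑ ℓ ∈ Finset.range n, τ ℓ ω)
    (by simp) hm hlimT
  rw [one_div, inv_inv] at hren
  have hren' : Tendsto (fun t : ℝ => (N t ω : ℝ) / t) atTop (nhds mu12) := by
    refine hren.congr (fun t => ?_)
    rw [hN t ω]
  -- generic composition lemma
  have hNcomp : ∀ (y : ℕ → ℝ), Tendsto y atTop atTop →
      Tendsto (fun n => y n / s n) atTop (nhds (1 - ρ2)) →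
      Tendsto (fun n => (N (y n) ω : ℝ) / s n) atTop (nhds (mu12 * (1 - ρ2))) := by
    intro y hytop hys
    have hc := (hren'.comp hytop).mul hys
    refine hc.congr' ?_
    filter_upwards [hytop.eventually_gt_atTop 0] with n hn
    have hyn : y n ≠ 0 := hn.ne'
    show (N (y n) ω : ℝ) / y n * (y n / s n) = (N (y n) ω : ℝ) / s n
    field_simp
  -- the integral processes along the subsequence
  have hI2s : Tendsto (fun n => (∫ u in (0:ℝ)..(s n),
      if q2 u ω = 0 then (1:ℝ) else 0) / s n) atTop (nhds (1 - ρ2)) := hωI.comp hs_top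
  have hI2top : Tendsto (fun n => (∫ u in (0:ℝ)..(s n),
      if q2 u ω = 0 then (1:ℝ) else 0)) atTop atTop := by
    have h := hI2s.pos_mul_atTop h1ρ hs_top
    refine h.congr (fun n => div_mul_cancel₀ _ (hs_pos n).ne')
  -- splitting of the indicator
  have hq1ω : Measurable (fun u => q1 u ω) :=
    hq1meas.comp (measurable_id.prodMk measurable_const)
  have hq2ω : Measurable (fun u => q2 u ω) :=
    hq2meas.comp (measurable_id.prodMk measurable_const)
  have hmeasA : Measurable (fun u => if c1 < q1 u ω ∧ q2 u ω = 0 then (1:ℝ) else 0) := by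
    refine Measurable.ite ?_ measurable_const measurable_const
    exact (hq1ω (measurableSet_Ioi (a := c1))).inter (hq2ω (MeasurableSet.singleton 0))
  have hmeasB : Measurable (fun u => if q1 u ω ≤ c1 ∧ q2 u ω = 0 then (1:ℝ) else 0) := by
    refine Measurable.ite ?_ measurable_const measurable_const
    exact (hq1ω (measurableSet_Iic (a := c1))).inter (hq2ω (MeasurableSet.singleton 0))
  have hbA : ∀ u, ‖(if c1 < q1 u ω ∧ q2 u ω = 0 then (1:ℝ) else 0)‖ ≤ 1 := fun u => by
    by_cases h : c1 < q1 u ω ∧ q2 u ω = 0 <;> simp [h]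
  have hbB : ∀ u, ‖(if q1 u ω ≤ c1 ∧ q2 u ω = 0 then (1:ℝ) else 0)‖ ≤ 1 := fun u => by
    by_cases h : q1 u ω ≤ c1 ∧ q2 u ω = 0 <;> simp [h]
  have hsplit : ∀ n, (∫ u in (0:ℝ)..(s n), if q2 u ω = 0 then (1:ℝ) else 0)
      = (∫ u in (0:ℝ)..(s n), if c1 < q1 u ω ∧ q2 u ω = 0 then (1:ℝ) else 0)
      + (∫ u in (0:ℝ)..(s n), if q1 u ω ≤ c1 ∧ q2 u ω = 0 then (1:ℝ) else 0) := by
    intro n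
    rw [← intervalIntegral.integral_add (II_bounded_aux hmeasA hbA 0 (s n))
      (II_bounded_aux hmeasB hbB 0 (s n))]
    congr 1
    funext u
    by_cases h1 : q2 u ω = 0
    · by_cases h2 : c1 < q1 u ω
      · simp [h1, h2, not_le.mpr h2]
      · simp [h1, h2, not_lt.mp h2]
    · simp [h1]
  have hJs : Tendsto (fun n => (∫ u in (0:ℝ)..(s n),
      if c1 < q1 u ω ∧ q2 u ω = 0 then (1:ℝ) else 0) / s n) atTop (nhds (1 - ρ2)) := by
    have hsub := hI2s.sub hωX
    rw [sub_zero] at hsub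
    refine hsub.congr (fun n => ?_)
    rw [hsplit n]
    ring
  have hJtop : Tendsto (fun n => (∫ u in (0:ℝ)..(s n),
      if c1 < q1 u ω ∧ q2 u ω = 0 then (1:ℝ) else 0)) atTop atTop := by
    have h := hJs.pos_mul_atTop h1ρ hs_top
    refine h.congr (fun n => div_mul_cancel₀ _ (hs_pos n).ne')
  have hNI2 := hNcomp _ hI2top hI2s
  have hNJ := hNcomp _ hJtop hJs
  -- squeeze for D12
  have hD : Tendsto (fun n => (D12 (s n) ω : ℝ) / s n) atTop (nhds (mu12 * (1 - ρ2))) := by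
    refine tendsto_of_tendsto_of_tendsto_of_le_of_le hNJ hNI2 (fun n => ?_) (fun n => ?_)
    · have h := (hD12 (s n) (hs_pos n).le ω).1
      exact div_le_div_of_nonneg_right (by exact_mod_cast h : (_ : ℝ) ≤ _) (hs_pos n).le
    · have h := (hD12 (s n) (hs_pos n).le ω).2
      exact div_le_div_of_nonneg_right (by exact_mod_cast h : (_ : ℝ) ≤ _) (hs_pos n).le
  refine ⟨hD, ?_⟩
  -- squeeze for A12
  have hinvs : Tendsto (fun n => 1 / s n) atTop (nhds 0) := by
    have := tendsto_inv_atTop_zero.comp hs_top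
    simpa [one_div, Function.comp_def] using this
  have hupper : Tendsto (fun n => (D12 (s n) ω : ℝ) / s n + 1 / s n) atTop
      (nhds (mu12 * (1 - ρ2))) := by
    have h := hD.add hinvs
    rwa [add_zero] at h
  refine tendsto_of_tendsto_of_tendsto_of_le_of_le hD hupper (fun n => ?_) (fun n => ?_)
  · have h := (hAD (s n) (hs_pos n).le ω).1
    exact div_le_div_of_nonneg_right (by exact_mod_cast h : (_ : ℝ) ≤ _) (hs_pos n).le
  · have h := (hAD (s n) (hs_pos n).le ω).2
    rw [← add_div]
    refine div_le_div_of_nonneg_right ?_ (hs_pos n).le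
    exact (by exact_mod_cast h : ((A12 (s n) ω : ℕ) : ℝ) ≤ (D12 (s n) ω : ℝ) + 1)
end
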